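/- Let a ≥ 1, x ≥ 0, and let g : [0,∞) → ℝ be continuously differentiable with |g'(r)| ≤ x·(a+r)^{−4} for all r ≥ 0. Define ḡ(r) = (1/r)∫₀ʳ g(s) ds for r > 0. Then ∫₀^∞ (g(s) − ḡ(s))² / s ds ≤ x² / a⁶. -/

import Mathlib

noncomputable section

open Real Set MeasureTheory intervalIntegral

/-- Radial average `ḡ(r) = (1/r)∫₀ʳ g(s) ds`, with `ḡ(0) = g(0)`. -/
def radAvg1 (g : ℝ → ℝ) (r : ℝ) : ℝ :=
  if r = 0 then g 0 else (1 / r) * ∫ s in (0:ℝ)..r, g s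

lemma hrep (g g' : ℝ → ℝ)
    (hd : ∀ r ∈ Ici (0:ℝ), HasDerivWithinAt g (g' r) (Ici 0) r)
    (hc : ContinuousOn g' (Ici 0)) (s : ℝ) (hs : 0 ≤ s) :
    s * g s - ∫ t in (0:ℝ)..s, g t = ∫ u in (0:ℝ)..s, u * g' u := by
  have hgc : ContinuousOn g (Ici 0) := fun r hr => (hd r hr).continuousWithinAt
  have hint : ∀ r ∈ Icc (0:ℝ) s, IntervalIntegrable g volume 0 r := by
    intro r hr
    apply (hgc.mono ?_).intervalIntegrable
    rw [uIcc_of_le hr.1]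
    exact (Icc_subset_Icc_right hr.2).trans (Icc_subset_Ici_self)
  have hf'c : ContinuousOn (fun u => u * g' u) (Icc 0 s) :=
    (continuous_id.continuousOn.mul (hc.mono (Icc_subset_Ici_self)))
  have hf'int : IntervalIntegrable (fun u => u * g' u) volume 0 s := by
    apply hf'c.intervalIntegrable_of_Icc hs
  have hcont : ContinuousOn (fun r => r * g r - ∫ t in (0:ℝ)..r, g t) (Icc 0 s) := by
    apply (continuous_id.continuousOn.mul (hgc.mono Icc_subset_Ici_self)).sub
    have := intervalIntegral.continuousOn_primitive_interval
      (f := g) (μ := volume) (a := 0) (b := s) ?_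
    · exact this.mono (by rw [uIcc_of_le hs])
    · rw [uIcc_of_le hs]
      exact (hgc.mono Icc_subset_Ici_self).integrableOn_compact isCompact_Icc
  have hderiv : ∀ r ∈ Ioo (0:ℝ) s,
      HasDerivWithinAt (fun r => r * g r - ∫ t in (0:ℝ)..r, g t) (r * g' r) (Ioi r) r := by
    intro r hr
    have hmem : Ici (0:ℝ) ∈ nhds r := Ici_mem_nhds hr.1
    have hg : HasDerivAt g (g' r) r := (hd r (le_of_lt hr.1)).hasDerivAt hmem
    have h1 : HasDerivAt (fun r => r * g r) (1 * g r + r * g' r) r :=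
      (hasDerivAt_id r).mul hg
    have h2 : HasDerivAt (fun r => ∫ t in (0:ℝ)..r, g t) (g r) r := by
      apply intervalIntegral.integral_hasDerivAt_right (hint r ⟨hr.1.le, hr.2.le⟩)
      · exact ⟨Ici 0, hmem, hgc.aestronglyMeasurable measurableSet_Ici⟩
      · exact hgc.continuousAt hmem
    have := (h1.sub h2)
    have h3 : HasDerivAt (fun r => r * g r - ∫ t in (0:ℝ)..r, g t) (1 * g r + r * g' r - g r) r := this
    rw [show 1 * g r + r * g' r - g r = r * g' r by ring] at h3
    exact h3.hasDerivWithinAt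
  have := intervalIntegral.integral_eq_sub_of_hasDeriv_right_of_le hs hcont hderiv hf'int
  rw [this]
  simp

lemma hbound1 (a x : ℝ) (ha : 1 ≤ a) (hx : 0 ≤ x) (g g' : ℝ → ℝ)
    (hd : ∀ r ∈ Ici (0:ℝ), HasDerivWithinAt g (g' r) (Ici 0) r)
    (hc : ContinuousOn g' (Ici 0))
    (hb : ∀ r ∈ Ici (0:ℝ), |g' r| ≤ x / (a + r) ^ 4)
    (s : ℝ) (hs : 0 ≤ s) :
    |s * g s - ∫ t in (0:ℝ)..s, g t| ≤ x * s ^ 2 / (2 * a ^ 4) := by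
  have ha0 : (0:ℝ) < a := lt_of_lt_of_le one_pos ha
  rw [hrep g g' hd hc s hs]
  have hf'int : IntervalIntegrable (fun u => u * g' u) volume 0 s :=
    (continuous_id.continuousOn.mul (hc.mono Icc_subset_Ici_self)).intervalIntegrable_of_Icc hs
  have h1 : |∫ u in (0:ℝ)..s, u * g' u| ≤ ∫ u in (0:ℝ)..s, |u * g' u| := by
    have := intervalIntegral.norm_integral_le_integral_norm (f := fun u => u * g' u)
      (μ := volume) (a := 0) (b := s) hs
    simpa [Real.norm_eq_abs, abs_mul] using this
  have h2 : (∫ u in (0:ℝ)..s, |u * g' u|) ≤ ∫ u in (0:ℝ)..s, x / a ^ 4 * u := by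
    apply intervalIntegral.integral_mono_on hs hf'int.abs
      (by apply Continuous.intervalIntegrable; continuity)
    intro u hu
    have hu0 : 0 ≤ u := hu.1
    have : |u * g' u| = u * |g' u| := by rw [abs_mul, abs_of_nonneg hu0]
    rw [this, mul_comm (x / a ^ 4) u]
    apply mul_le_mul_of_nonneg_left _ hu0
    refine (hb u hu0).trans ?_
    apply div_le_div_of_nonneg_left hx (by positivity)
    apply pow_le_pow_left₀ ha0.le (by linarith) 4
  have h3 : (∫ u in (0:ℝ)..s, x / a ^ 4 * u) = x * s ^ 2 / (2 * a ^ 4) := by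
    rw [intervalIntegral.integral_const_mul, integral_id]
    ring
  calc |∫ u in (0:ℝ)..s, u * g' u| ≤ _ := h1
    _ ≤ _ := h2
    _ = _ := h3

lemma hbound2 (a x : ℝ) (ha : 1 ≤ a) (hx : 0 ≤ x) (g g' : ℝ → ℝ)
    (hd : ∀ r ∈ Ici (0:ℝ), HasDerivWithinAt g (g' r) (Ici 0) r)
    (hc : ContinuousOn g' (Ici 0))
    (hb : ∀ r ∈ Ici (0:ℝ), |g' r| ≤ x / (a + r) ^ 4)
    (s : ℝ) (hs : 0 ≤ s) :
    |s * g s - ∫ t in (0:ℝ)..s, g t| ≤ x / (2 * a ^ 2) := by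
  have ha0 : (0:ℝ) < a := lt_of_lt_of_le one_pos ha
  rw [hrep g g' hd hc s hs]
  have hf'int : IntervalIntegrable (fun u => u * g' u) volume 0 s :=
    (continuous_id.continuousOn.mul (hc.mono Icc_subset_Ici_self)).intervalIntegrable_of_Icc hs
  have h1 : |∫ u in (0:ℝ)..s, u * g' u| ≤ ∫ u in (0:ℝ)..s, |u * g' u| := by
    have := intervalIntegral.norm_integral_le_integral_norm (f := fun u => u * g' u)
      (μ := volume) (a := 0) (b := s) hs
    simpa [Real.norm_eq_abs, abs_mul] using this
  have h2 : (∫ u in (0:ℝ)..s, |u * g' u|) ≤ ∫ u in (0:ℝ)..s, x * (a + u) ^ (-3 : ℤ) := by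
    apply intervalIntegral.integral_mono_on hs hf'int.abs
    · apply ContinuousOn.intervalIntegrable
      apply continuousOn_const.mul
      apply ContinuousOn.zpow₀ ((continuous_const.add continuous_id).continuousOn)
      intro u hu
      rw [uIcc_of_le hs] at hu
      have h0 : (0:ℝ) < a + u := by nlinarith [hu.1]
      exact Or.inl (by simpa using h0.ne')
    intro u hu
    have hu0 : 0 ≤ u := hu.1
    have hau : (0:ℝ) < a + u := by linarith
    have habs : |u * g' u| = u * |g' u| := by rw [abs_mul, abs_of_nonneg hu0]
    rw [habs]
    have step1 : u * |g' u| ≤ u * (x / (a + u) ^ 4) :=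
      mul_le_mul_of_nonneg_left (hb u hu0) hu0
    refine step1.trans ?_
    have e : x * (a + u) ^ (-3 : ℤ) = x / (a + u) ^ 3 := by
      have e' : ((a+u):ℝ) ^ (3:ℤ) = (a+u) ^ (3:ℕ) := by norm_cast
      rw [zpow_neg, e', div_eq_mul_inv]
    rw [e]
    have step2 : u * (x / (a + u) ^ 4) ≤ (a + u) * (x / (a + u) ^ 4) :=
      mul_le_mul_of_nonneg_right (by linarith) (by positivity)
    refine step2.trans (le_of_eq ?_)
    field_simp
  have h3 : (∫ u in (0:ℝ)..s, x * (a + u) ^ (-3 : ℤ)) ≤ x / (2 * a ^ 2) := by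
    rw [intervalIntegral.integral_const_mul]
    have hcomp : (∫ u in (0:ℝ)..s, (a + u) ^ (-3 : ℤ))
        = ∫ u in a..(a + s), u ^ (-3 : ℤ) := by
      simpa using intervalIntegral.integral_comp_add_left (a := (0:ℝ)) (b := s)
        (fun u => u ^ (-3 : ℤ)) a
    rw [hcomp, integral_zpow]
    · have has : (0:ℝ) < a + s := by linarith
      have e1 : ((a+s):ℝ) ^ (-3 + 1 : ℤ) = ((a+s)^2)⁻¹ := by
        rw [show (-3 + 1 : ℤ) = -2 by norm_num, zpow_neg]
        congr 1
      have e2 : (a:ℝ) ^ (-3 + 1 : ℤ) = (a^2)⁻¹ := by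
        rw [show (-3 + 1 : ℤ) = -2 by norm_num, zpow_neg]
        congr 1
      have e3 : (((-3 : ℤ) + 1 : ℤ) : ℝ) = -2 := by norm_num
      rw [e1, e2]
      push_cast
      have h6 : (0:ℝ) ≤ ((a+s)^2)⁻¹ := by positivity
      have h7 : (((a+s)^2)⁻¹ - (a^2)⁻¹) / (-3 + 1 : ℝ)
          = ((a^2)⁻¹ - ((a+s)^2)⁻¹) / 2 := by ring
      rw [h7]
      have h8 : ((a^2)⁻¹ - ((a+s)^2)⁻¹) / 2 ≤ (a^2)⁻¹ / 2 := by linarith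
      refine (mul_le_mul_of_nonneg_left h8 hx).trans (le_of_eq ?_)
      rw [div_eq_mul_inv x, mul_inv]
      ring
    · right
      refine ⟨by norm_num, ?_⟩
      rw [uIcc_of_le (by linarith : a ≤ a + s)]
      intro hmem
      have := hmem.1
      linarith
  exact h1.trans (h2.trans h3)

/-- Christodoulou's integral estimate controlling the metric
coefficient `f`: if `|g'(r)| ≤ x(a+r)^{−4}` on `[0,∞)` with `a ≥ 1`, then
`∫₀^∞ (g − ḡ)²/s ds ≤ x²/a⁶`. -/
theorem integral_estimate_for_metric_coefficient
    (a x : ℝ) (ha : 1 ≤ a) (hx : 0 ≤ x) (g g' : ℝ → ℝ)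
    (hd : ∀ r ∈ Ici (0:ℝ), HasDerivWithinAt g (g' r) (Ici 0) r)
    (hc : ContinuousOn g' (Ici 0))
    (hb : ∀ r ∈ Ici (0:ℝ), |g' r| ≤ x / (a + r) ^ 4) :
    ∫⁻ s in Ioi (0:ℝ), ENNReal.ofReal ((g s - radAvg1 g s) ^ 2 / s)
      ≤ ENNReal.ofReal (x ^ 2 / a ^ 6) := by
  have ha0 : (0:ℝ) < a := lt_of_lt_of_le one_pos ha
  have hId : ∀ s : ℝ, 0 < s →
      (g s - radAvg1 g s) ^ 2 / s = (s * g s - ∫ t in (0:ℝ)..s, g t) ^ 2 / s ^ 3 := by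
    intro s hs
    rw [radAvg1, if_neg hs.ne']
    field_simp
  -- pointwise bound on (0, a]
  have hP1 : ∀ s ∈ Ioc (0:ℝ) a, ENNReal.ofReal ((g s - radAvg1 g s) ^ 2 / s)
      ≤ ENNReal.ofReal (x ^ 2 / (4 * a ^ 8) * s) := by
    intro s hs
    apply ENNReal.ofReal_le_ofReal
    rw [hId s hs.1]
    have hH := hbound1 a x ha hx g g' hd hc hb s hs.1.le
    have hs3 : (0:ℝ) < s ^ 3 := pow_pos hs.1 3
    have h2 : (s * g s - ∫ t in (0:ℝ)..s, g t) ^ 2 ≤ (x * s ^ 2 / (2 * a ^ 4)) ^ 2 := by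
      rw [← sq_abs]
      exact pow_le_pow_left₀ (abs_nonneg _) hH 2
    calc (s * g s - ∫ t in (0:ℝ)..s, g t) ^ 2 / s ^ 3
        ≤ (x * s ^ 2 / (2 * a ^ 4)) ^ 2 / s ^ 3 := by gcongr
      _ = x ^ 2 / (4 * a ^ 8) * s := by
          field_simp
          ring
  -- pointwise bound on (a, ∞)
  have hP2 : ∀ s ∈ Ioi a, ENNReal.ofReal ((g s - radAvg1 g s) ^ 2 / s)
      ≤ ENNReal.ofReal (x ^ 2 / (4 * a ^ 4) * s ^ (-3 : ℝ)) := by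
    intro s hs
    have hs0 : (0:ℝ) < s := lt_trans ha0 hs
    apply ENNReal.ofReal_le_ofReal
    rw [hId s hs0]
    have hH := hbound2 a x ha hx g g' hd hc hb s hs0.le
    have hs3 : (0:ℝ) < s ^ 3 := pow_pos hs0 3
    have h2 : (s * g s - ∫ t in (0:ℝ)..s, g t) ^ 2 ≤ (x / (2 * a ^ 2)) ^ 2 := by
      rw [← sq_abs]
      exact pow_le_pow_left₀ (abs_nonneg _) hH 2
    have hr : s ^ (-3 : ℝ) = (s ^ 3)⁻¹ := by
      rw [Real.rpow_neg hs0.le, show ((3:ℝ)) = ((3:ℕ):ℝ) by norm_num, Real.rpow_natCast]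
    calc (s * g s - ∫ t in (0:ℝ)..s, g t) ^ 2 / s ^ 3
        ≤ (x / (2 * a ^ 2)) ^ 2 / s ^ 3 := by gcongr
      _ = x ^ 2 / (4 * a ^ 4) * s ^ (-3 : ℝ) := by
          rw [hr, div_pow, show ((2 * a ^ 2) ^ 2 : ℝ) = 4 * a ^ 4 by ring, div_div,
            div_eq_mul_inv (x ^ 2), mul_inv, ← mul_assoc, ← div_eq_mul_inv (x ^ 2)]
  have hsplit : Ioi (0:ℝ) = Ioc 0 a ∪ Ioi a := (Ioc_union_Ioi_eq_Ioi ha0.le).symm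
  rw [hsplit, lintegral_union measurableSet_Ioi Ioc_disjoint_Ioi_same]
  have hpiece1 : ∫⁻ s in Ioc (0:ℝ) a, ENNReal.ofReal ((g s - radAvg1 g s) ^ 2 / s)
      ≤ ENNReal.ofReal (x ^ 2 / (8 * a ^ 6)) := by
    refine (setLIntegral_mono' measurableSet_Ioc hP1).trans ?_
    rw [← ofReal_integral_eq_lintegral_ofReal]
    · apply le_of_eq
      congr 1
      rw [← intervalIntegral.integral_of_le ha0.le, intervalIntegral.integral_const_mul,
        integral_id]
      have ha' : a ≠ 0 := ha0.ne'
      field_simp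
      ring
    · exact (continuous_const.mul continuous_id).integrableOn_Ioc
    · refine (ae_restrict_iff' measurableSet_Ioc).2 (Filter.Eventually.of_forall ?_)
      intro s hs
      exact mul_nonneg (by positivity) hs.1.le
  have hpiece2 : ∫⁻ s in Ioi a, ENNReal.ofReal ((g s - radAvg1 g s) ^ 2 / s)
      ≤ ENNReal.ofReal (x ^ 2 / (8 * a ^ 6)) := by
    refine (setLIntegral_mono' measurableSet_Ioi hP2).trans ?_
    rw [← ofReal_integral_eq_lintegral_ofReal]
    · apply le_of_eq
      congr 1
      rw [MeasureTheory.integral_const_mul, integral_Ioi_rpow_of_lt (by norm_num) ha0]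
      have e : (a : ℝ) ^ (-3 + 1 : ℝ) = (a ^ 2)⁻¹ := by
        rw [show (-3 + 1 : ℝ) = -2 by norm_num, Real.rpow_neg ha0.le,
          show ((2:ℝ)) = ((2:ℕ):ℝ) by norm_num, Real.rpow_natCast]
      rw [e, show (-3 + 1 : ℝ) = -2 by norm_num]
      have ha' : a ≠ 0 := ha0.ne'
      field_simp
      ring
    · exact (integrableOn_Ioi_rpow_of_lt (by norm_num) ha0).const_mul _
    · refine (ae_restrict_iff' measurableSet_Ioi).2 (Filter.Eventually.of_forall ?_)
      intro s hs
      have hs0 : (0:ℝ) < s := lt_trans ha0 hs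
      positivity
  calc _ ≤ ENNReal.ofReal (x ^ 2 / (8 * a ^ 6)) + ENNReal.ofReal (x ^ 2 / (8 * a ^ 6)) :=
        add_le_add hpiece1 hpiece2
    _ = ENNReal.ofReal (x ^ 2 / (8 * a ^ 6) + x ^ 2 / (8 * a ^ 6)) :=
        (ENNReal.ofReal_add (by positivity) (by positivity)).symm
    _ ≤ ENNReal.ofReal (x ^ 2 / a ^ 6) := by
        apply ENNReal.ofReal_le_ofReal
        rw [← add_div]
        rw [div_le_div_iff₀ (by positivity) (by positivity)]
        nlinarith [sq_nonneg x, pow_pos ha0 6]
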